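/- Let G be a maximal stabilizer group on N qubits with stabilizer state |ψ_G⟩, and let Ĥ = Σ_P h(P)·P be a traceless operator expanded in nonidentity prefactor-1 Pauli strings. If Ĥ|ψ_G⟩ = 0, then for every prefactor-1 Pauli string P, Σ_{Q : a_{P,Q}PQ ∈ G} h(Q)·a_{P,Q}^{−1} = 0, where the sum is over nonidentity prefactor-1 Pauli strings Q equivalent to P. -/

import Mathlib

open Matrix Complex BigOperators
open scoped Classical

noncomputable section

/-- Single-qubit Pauli matrices: I, X, Y, Z. -/
def pauli1 : Fin 4 → Matrix (Fin 2) (Fin 2) ℂ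
  | 0 => 1
  | 1 => !![0, 1; 1, 0]
  | 2 => !![0, -Complex.I; Complex.I, 0]
  | 3 => !![1, 0; 0, -1]

/-- Operators on an N-qubit system with sites indexed by `V`. -/
abbrev QOp (V : Type*) := Matrix (V → Fin 2) (V → Fin 2) ℂ

/-- The prefactor-1 Pauli string with single-site labels `p`. -/
def pauliOp {V : Type*} [Fintype V] (p : V → Fin 4) : QOp V :=
  Matrix.of fun x y => ∏ i, pauli1 (p i) (x i) (y i)

/-- Support of a Pauli string: sites where the tensor factor is not the identity. -/
def psupp {V : Type*} [Fintype V] (p : V → Fin 4) : Finset V :=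
  Finset.univ.filter fun i => p i ≠ 0

/-- Allowed phases of Pauli group elements. -/
def isPhase (a : ℂ) : Prop := a = 1 ∨ a = -1 ∨ a = Complex.I ∨ a = -Complex.I

/-- A maximal stabilizer group on qubits indexed by `V`: an abelian set of
prefactor-`±1` Pauli strings, closed under multiplication, containing `I`,
not containing `-I`, of cardinality `2 ^ |V|`. -/
structure MaxStabilizer (V : Type*) [Fintype V] [DecidableEq V] where
  carrier : Finset (QOp V)
  mem_pauli : ∀ g ∈ carrier, ∃ (c : ℂ) (p : V → Fin 4), (c = 1 ∨ c = -1) ∧ g = c • pauliOp p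
  one_mem : (1 : QOp V) ∈ carrier
  mul_mem : ∀ g ∈ carrier, ∀ h ∈ carrier, g * h ∈ carrier
  mul_comm' : ∀ g ∈ carrier, ∀ h ∈ carrier, g * h = h * g
  neg_one_not_mem : (-1 : QOp V) ∉ carrier
  card_eq : carrier.card = 2 ^ Fintype.card V

/-- `ψ` is the stabilizer state of `G`: a normalized common `+1`-eigenvector of all
elements of `G`. -/
def IsStabState {V : Type*} [Fintype V] [DecidableEq V] (G : MaxStabilizer V)
    (ψ : (V → Fin 2) → ℂ) : Prop :=
  (∀ g ∈ G.carrier, Matrix.mulVec g ψ = ψ) ∧ ∑ x, starRingEnd ℂ (ψ x) * ψ x = 1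

/-- The projector `|ψ⟩⟨ψ|` onto a state `ψ`. -/
def projOf {V : Type*} (ψ : (V → Fin 2) → ℂ) : QOp V :=
  Matrix.vecMulVec ψ fun x => starRingEnd ℂ (ψ x)

/-- Reduced density matrix (partial trace over the complement of `A`). -/
def reduced {V : Type*} [Fintype V] [DecidableEq V] (ρ : QOp V) (A : Finset V) :
    Matrix ({i // i ∈ A} → Fin 2) ({i // i ∈ A} → Fin 2) ℂ :=
  Matrix.of fun a b => ∑ c : {i // i ∉ A} → Fin 2,
    ρ (fun i => if h : i ∈ A then a ⟨i, h⟩ else c ⟨i, h⟩)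
      (fun i => if h : i ∈ A then b ⟨i, h⟩ else c ⟨i, h⟩)

/-- `δ(G)`: minimum support size over nonidentity elements of `G`. -/
def sdelta {V : Type*} [Fintype V] [DecidableEq V] (G : MaxStabilizer V) : ℕ :=
  sInf {k | ∃ (c : ℂ) (p : V → Fin 4), (c = 1 ∨ c = -1) ∧ c • pauliOp p ∈ G.carrier ∧
    c • pauliOp p ≠ 1 ∧ (psupp p).card = k}

/-- The relation `P ∼ Q` iff `a·P·Q ∈ G` for some phase `a ∈ {±1, ±i}`. -/
def PRel {V : Type*} [Fintype V] [DecidableEq V] (G : MaxStabilizer V)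
    (P Q : V → Fin 4) : Prop :=
  ∃ a : ℂ, isPhase a ∧ a • (pauliOp P * pauliOp Q) ∈ G.carrier




def pmul : Fin 4 → Fin 4 → Fin 4
  | 0, b => b
  | 1, 0 => 1 | 1, 1 => 0 | 1, 2 => 3 | 1, 3 => 2
  | 2, 0 => 2 | 2, 1 => 3 | 2, 2 => 0 | 2, 3 => 1
  | 3, 0 => 3 | 3, 1 => 2 | 3, 2 => 1 | 3, 3 => 0

def pphase : Fin 4 → Fin 4 → ℂ
  | 0, _ => 1
  | 1, 0 => 1 | 1, 1 => 1 | 1, 2 => Complex.I | 1, 3 => -Complex.I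
  | 2, 0 => 1 | 2, 1 => -Complex.I | 2, 2 => 1 | 2, 3 => Complex.I
  | 3, 0 => 1 | 3, 1 => Complex.I | 3, 2 => -Complex.I | 3, 3 => 1

lemma pauli1_mul (a b : Fin 4) : pauli1 a * pauli1 b = pphase a b • pauli1 (pmul a b) := by
  fin_cases a <;> fin_cases b <;>
    · ext i j
      fin_cases i <;> fin_cases j <;>
        simp [pauli1, pmul, pphase, Matrix.mul_apply, Fin.sum_univ_two, Matrix.one_apply]

lemma conj_pauli1 (a : Fin 4) (x y : Fin 2) :
    starRingEnd ℂ (pauli1 a x y) = pauli1 a y x := by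
  fin_cases a <;> fin_cases x <;> fin_cases y <;> simp [pauli1, Matrix.one_apply]

lemma pauli1_trace (a : Fin 4) : (pauli1 a).trace = if a = 0 then 2 else 0 := by
  fin_cases a <;> simp [pauli1, Matrix.trace, Matrix.diag, Fin.sum_univ_two]

lemma pmul_self (a : Fin 4) : pmul a a = 0 := by fin_cases a <;> rfl
lemma pphase_self (a : Fin 4) : pphase a a = 1 := by fin_cases a <;> rfl
lemma pmul_eq_zero_iff (a b : Fin 4) : pmul a b = 0 ↔ a = b := by
  fin_cases a <;> fin_cases b <;> simp [pmul]

variable {V : Type*} [Fintype V] [DecidableEq V]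

lemma pauliOp_mul (p q : V → Fin 4) :
    pauliOp p * pauliOp q
      = (∏ i, pphase (p i) (q i)) • pauliOp (fun i => pmul (p i) (q i)) := by
  ext x y
  simp only [Matrix.mul_apply, pauliOp, Matrix.of_apply, Matrix.smul_apply, smul_eq_mul]
  have h1 : ∀ z : V → Fin 2,
      (∏ i, pauli1 (p i) (x i) (z i)) * ∏ i, pauli1 (q i) (z i) (y i)
        = ∏ i, (pauli1 (p i) (x i) (z i) * pauli1 (q i) (z i) (y i)) := by
    intro z; rw [Finset.prod_mul_distrib]
  simp only [h1]
  have h2 : ∑ z : V → Fin 2, ∏ i, (pauli1 (p i) (x i) (z i) * pauli1 (q i) (z i) (y i))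
      = ∏ i, ∑ t : Fin 2, pauli1 (p i) (x i) t * pauli1 (q i) t (y i) := by
    rw [Finset.prod_univ_sum]
    simp [Fintype.piFinset_univ]
  rw [h2]
  have h3 : ∀ i, ∑ t : Fin 2, pauli1 (p i) (x i) t * pauli1 (q i) t (y i)
      = pphase (p i) (q i) * pauli1 (pmul (p i) (q i)) (x i) (y i) := by
    intro i
    have := congrArg (fun M : Matrix (Fin 2) (Fin 2) ℂ => M (x i) (y i)) (pauli1_mul (p i) (q i))
    simpa [Matrix.mul_apply, Matrix.smul_apply] using this
  rw [Finset.prod_congr rfl fun i _ => h3 i, Finset.prod_mul_distrib]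

lemma pauliOp_zero : pauliOp (fun _ : V => (0 : Fin 4)) = (1 : QOp V) := by
  ext x y
  simp only [pauliOp, Matrix.of_apply, pauli1, Matrix.one_apply]
  by_cases hxy : x = y
  · simp [hxy]
  · obtain ⟨i, hi⟩ := Function.ne_iff.mp hxy
    rw [if_neg hxy]
    exact Finset.prod_eq_zero (Finset.mem_univ i) (by simp [hi])

lemma pauliOp_sq (p : V → Fin 4) : pauliOp p * pauliOp p = 1 := by
  rw [pauliOp_mul]
  simp [pphase_self, pmul_self, pauliOp_zero]

lemma pauliOp_trace (p : V → Fin 4) :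
    (pauliOp p).trace = if p = (fun _ => 0) then ((2 : ℂ) ^ Fintype.card V) else 0 := by
  have h2 : (pauliOp p).trace = ∏ i, ∑ t : Fin 2, pauli1 (p i) t t := by
    simp only [Matrix.trace, Matrix.diag, pauliOp, Matrix.of_apply]
    rw [Finset.prod_univ_sum]
    simp [Fintype.piFinset_univ]
  rw [h2]
  have htr : ∀ i, ∑ t : Fin 2, pauli1 (p i) t t = (pauli1 (p i)).trace := by
    intro i; simp [Matrix.trace, Matrix.diag]
  by_cases hp : p = fun _ => 0
  · subst hp
    rw [if_pos rfl]
    rw [Finset.prod_const, Finset.card_univ]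
    norm_num [pauli1, Matrix.one_apply, Fin.sum_univ_two]
  · rw [if_neg hp]
    obtain ⟨i, hi⟩ := Function.ne_iff.mp hp
    apply Finset.prod_eq_zero (Finset.mem_univ i)
    rw [htr, pauli1_trace, if_neg hi]

lemma pauliOp_conjTranspose (p : V → Fin 4) : (pauliOp p)ᴴ = pauliOp p := by
  ext x y
  simp only [Matrix.conjTranspose_apply, pauliOp, Matrix.of_apply, star_def]
  rw [map_prod]
  exact Finset.prod_congr rfl fun i _ => conj_pauli1 _ _ _



-- phase lemmas
lemma isPhase_one : isPhase 1 := Or.inl rfl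

lemma isPhase_mul {x y : ℂ} (hx : isPhase x) (hy : isPhase y) : isPhase (x * y) := by
  rcases hx with rfl|rfl|rfl|rfl <;> rcases hy with rfl|rfl|rfl|rfl <;>
    simp [isPhase, Complex.I_mul_I] <;> ring_nf <;> simp [Complex.I_sq]

lemma isPhase_ne_zero {x : ℂ} (hx : isPhase x) : x ≠ 0 := by
  rcases hx with rfl|rfl|rfl|rfl <;> simp [Complex.I_ne_zero]

lemma isPhase_inv {x : ℂ} (hx : isPhase x) : isPhase x⁻¹ := by
  rcases hx with rfl|rfl|rfl|rfl <;> simp [isPhase, Complex.inv_I, inv_neg]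

lemma isPhase_neg {x : ℂ} (hx : isPhase x) : isPhase (-x) := by
  rcases hx with rfl|rfl|rfl|rfl <;> simp [isPhase]

lemma pphase_isPhase (a b : Fin 4) : isPhase (pphase a b) := by
  fin_cases a <;> fin_cases b <;> simp [pphase, isPhase]

lemma isPhase_prod {V : Type*} [Fintype V] (p q : V → Fin 4) :
    isPhase (∏ i, pphase (p i) (q i)) :=
  Finset.prod_induction _ isPhase (fun _ _ => isPhase_mul) isPhase_one
    (fun i _ => pphase_isPhase (p i) (q i))

variable {V : Type*} [Fintype V] [DecidableEq V]

lemma stab_conjTranspose (G : MaxStabilizer V) : ∀ g ∈ G.carrier, gᴴ = g := by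
  intro g hg
  obtain ⟨c, p, hc, rfl⟩ := G.mem_pauli g hg
  rw [Matrix.conjTranspose_smul, pauliOp_conjTranspose]
  rcases hc with rfl | rfl <;> simp

lemma stab_sq (G : MaxStabilizer V) : ∀ g ∈ G.carrier, g * g = 1 := by
  intro g hg
  obtain ⟨c, p, hc, rfl⟩ := G.mem_pauli g hg
  rw [Matrix.smul_mul, Matrix.mul_smul, smul_smul, pauliOp_sq]
  rcases hc with rfl | rfl <;> simp

lemma stab_mul_sum (G : MaxStabilizer V) {g : QOp V} (hg : g ∈ G.carrier) :
    g * (∑ k ∈ G.carrier, k) = ∑ k ∈ G.carrier, k := by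
  rw [Finset.mul_sum]
  refine Finset.sum_nbij' (fun k => g * k) (fun k => g * k)
    (fun k hk => G.mul_mem g hg k hk) (fun k hk => G.mul_mem g hg k hk)
    (fun k _ => by show g * (g * k) = k; rw [← mul_assoc, stab_sq G g hg, one_mul])
    (fun k _ => by show g * (g * k) = k; rw [← mul_assoc, stab_sq G g hg, one_mul])
    (fun k _ => rfl)

lemma stab_trace (G : MaxStabilizer V) :
    ∑ g ∈ G.carrier, g.trace = (2 : ℂ) ^ Fintype.card V := by
  rw [Finset.sum_eq_single (1 : QOp V)]
  · rw [Matrix.trace_one]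
    simp [Fintype.card_fun]
  · intro g hg hne
    obtain ⟨c, p, hc, rfl⟩ := G.mem_pauli g hg
    rw [Matrix.trace_smul, pauliOp_trace, smul_eq_mul]
    by_cases hp : p = fun _ => 0
    · exfalso
      subst hp
      rw [pauliOp_zero] at hg hne
      rcases hc with rfl | rfl
      · exact hne (one_smul _ _)
      · exact G.neg_one_not_mem (by simpa using hg)
    · rw [if_neg hp, mul_zero]
  · intro hmem; exact absurd G.one_mem hmem

lemma trace_conjTranspose_mul_self_eq_zero {n : Type*} [Fintype n] [DecidableEq n]
    {M : Matrix n n ℂ} (h : (Mᴴ * M).trace = 0) : M = 0 := by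
  have h2 : ∑ j : n, ∑ i : n, (Complex.normSq (M i j) : ℂ) = 0 := by
    simpa [Matrix.trace, Matrix.diag, Matrix.mul_apply, Matrix.conjTranspose_apply,
      Complex.star_def, Complex.normSq_eq_conj_mul_self] using h
  have h3 : ∑ j : n, ∑ i : n, Complex.normSq (M i j) = 0 := by
    exact_mod_cast h2
  ext i j
  have hnn : ∀ j' ∈ Finset.univ, (0:ℝ) ≤ ∑ i' : n, Complex.normSq (M i' j') :=
    fun j' _ => Finset.sum_nonneg fun i' _ => Complex.normSq_nonneg _
  have hj := (Finset.sum_eq_zero_iff_of_nonneg hnn).mp h3 j (Finset.mem_univ j)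
  have hi := (Finset.sum_eq_zero_iff_of_nonneg
    (fun i' _ => Complex.normSq_nonneg (M i' j))).mp hj i (Finset.mem_univ i)
  simpa using Complex.normSq_eq_zero.mp hi

lemma proj_eq (G : MaxStabilizer V) (ψ : (V → Fin 2) → ℂ) (hψ : IsStabState G ψ) :
    projOf ψ = ((2 : ℂ) ^ Fintype.card V)⁻¹ • ∑ g ∈ G.carrier, g := by
  set c : ℂ := ((2 : ℂ) ^ Fintype.card V)⁻¹ with hc
  have h2 : (2 : ℂ) ^ Fintype.card V ≠ 0 := pow_ne_zero _ two_ne_zero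
  set Pi : QOp V := c • ∑ g ∈ G.carrier, g with hPi
  set Pr : QOp V := projOf ψ with hPr
  -- Π ψ = ψ
  have hPiψ : Pi.mulVec ψ = ψ := by
    have hsum : (∑ g ∈ G.carrier, g).mulVec ψ = ∑ g ∈ G.carrier, g.mulVec ψ := by
      ext x
      simp [Matrix.mulVec, dotProduct, Matrix.sum_apply, Finset.sum_apply,
        Finset.sum_mul]
      rw [Finset.sum_comm]
    rw [hPi, Matrix.smul_mulVec, hsum]
    have : ∀ g ∈ G.carrier, g.mulVec ψ = ψ := hψ.1
    rw [Finset.sum_congr rfl this, Finset.sum_const, G.card_eq]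
    ext x
    simp only [Pi.smul_apply, smul_eq_mul, nsmul_eq_mul]
    rw [hc]
    push_cast
    field_simp
    simp [h2]
  -- Π hermitian
  have hPiH : Piᴴ = Pi := by
    rw [hPi, Matrix.conjTranspose_smul, Matrix.conjTranspose_sum]
    congr 1
    · simp [hc, Complex.star_def, ← Complex.ofReal_pow]
    · exact Finset.sum_congr rfl (stab_conjTranspose G)
  -- Π idempotent
  have hPi2 : Pi * Pi = Pi := by
    rw [hPi, Matrix.smul_mul, Matrix.mul_smul, smul_smul, Finset.sum_mul]
    rw [Finset.sum_congr rfl (fun g hg => stab_mul_sum G hg), Finset.sum_const, G.card_eq]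
    rw [← Nat.cast_smul_eq_nsmul ℂ, smul_smul]
    congr 1
    rw [hc]
    push_cast
    field_simp
  -- Pr facts
  have hnorm : ∑ x, starRingEnd ℂ (ψ x) * ψ x = 1 := hψ.2
  have hPrH : Prᴴ = Pr := by
    rw [hPr, projOf]
    ext x y
    simp [Matrix.conjTranspose_apply, Matrix.vecMulVec_apply, Complex.star_def, mul_comm]
  have hPr2 : Pr * Pr = Pr := by
    rw [hPr, projOf]
    ext x y
    simp only [Matrix.mul_apply, Matrix.vecMulVec_apply]
    calc ∑ z, ψ x * starRingEnd ℂ (ψ z) * (ψ z * starRingEnd ℂ (ψ y))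
        = (ψ x * starRingEnd ℂ (ψ y)) * ∑ z, starRingEnd ℂ (ψ z) * ψ z := by
          rw [Finset.mul_sum]; exact Finset.sum_congr rfl fun z _ => by ring
      _ = ψ x * starRingEnd ℂ (ψ y) := by rw [hnorm, mul_one]
  have hPiPr : Pi * Pr = Pr := by
    rw [hPr, projOf]
    ext x y
    simp only [Matrix.mul_apply, Matrix.vecMulVec_apply]
    have : ∑ z, Pi x z * (ψ z * starRingEnd ℂ (ψ y))
        = (∑ z, Pi x z * ψ z) * starRingEnd ℂ (ψ y) := by
      rw [Finset.sum_mul]; exact Finset.sum_congr rfl fun z _ => by ring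
    rw [this]
    have : ∑ z, Pi x z * ψ z = Pi.mulVec ψ x := by simp [Matrix.mulVec, dotProduct]
    rw [this, hPiψ]
  have hPrPi : Pr * Pi = Pr := by
    have := congrArg Matrix.conjTranspose hPiPr
    rwa [Matrix.conjTranspose_mul, hPiH, hPrH] at this
  -- traces
  have hPitr : Pi.trace = 1 := by
    rw [hPi, Matrix.trace_smul, Matrix.trace_sum, stab_trace G, hc, smul_eq_mul,
      inv_mul_cancel₀ h2]
  have hPrtr : Pr.trace = 1 := by
    rw [hPr, projOf, Matrix.trace, ← hnorm]
    exact Finset.sum_congr rfl fun x _ => by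
      simp [Matrix.diag, Matrix.vecMulVec_apply, mul_comm]
  -- M := Pi - Pr is zero
  have hM : Pi - Pr = 0 := by
    apply trace_conjTranspose_mul_self_eq_zero
    have hH : (Pi - Pr)ᴴ = Pi - Pr := by rw [Matrix.conjTranspose_sub, hPiH, hPrH]
    rw [hH, Matrix.sub_mul, Matrix.mul_sub, Matrix.mul_sub, hPi2, hPr2, hPiPr, hPrPi]
    have : Pi - Pr - (Pr - Pr) = Pi - Pr := by abel
    rw [this, Matrix.trace_sub, hPitr, hPrtr, sub_self]
  exact (sub_eq_zero.mp hM).symm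

lemma sum_mulVec' {κ : Type*} (s : Finset κ) (f : κ → QOp V) (v : (V → Fin 2) → ℂ) :
    (∑ a ∈ s, f a).mulVec v = ∑ a ∈ s, (f a).mulVec v := by
  ext x
  simp [Matrix.mulVec, dotProduct, Matrix.sum_apply, Finset.sum_apply, Finset.sum_mul]
  rw [Finset.sum_comm]

lemma dot_sum' {κ : Type*} (s : Finset κ) (f : κ → ((V → Fin 2) → ℂ)) (v : (V → Fin 2) → ℂ) :
    v ⬝ᵥ (∑ a ∈ s, f a) = ∑ a ∈ s, v ⬝ᵥ f a := by
  simp [dotProduct, Finset.sum_apply, Finset.mul_sum]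
  rw [Finset.sum_comm]

lemma dot_eq_trace (ψ : (V → Fin 2) → ℂ) (R : QOp V) :
    star ψ ⬝ᵥ R.mulVec ψ = (R * projOf ψ).trace := by
  show ∑ x, star ψ x * (∑ y, R x y * ψ y) = ∑ x, (∑ y, R x y * (ψ y * starRingEnd ℂ (ψ x)))
  refine Finset.sum_congr rfl fun x _ => ?_
  rw [Finset.mul_sum]
  refine Finset.sum_congr rfl fun y _ => ?_
  simp only [Pi.star_apply, Complex.star_def]
  ring

lemma expval_mem (G : MaxStabilizer V) (ψ : (V → Fin 2) → ℂ) (hψ : IsStabState G ψ)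
    {g : QOp V} (hg : g ∈ G.carrier) : star ψ ⬝ᵥ g.mulVec ψ = 1 := by
  rw [hψ.1 g hg]
  simpa [dotProduct, Complex.star_def] using hψ.2

lemma expval_not_rel (G : MaxStabilizer V) (ψ : (V → Fin 2) → ℂ) (hψ : IsStabState G ψ)
    (P Q : V → Fin 4) (hQ : ¬ PRel G P Q) :
    star ψ ⬝ᵥ (pauliOp P * pauliOp Q).mulVec ψ = 0 := by
  rw [dot_eq_trace, proj_eq G ψ hψ, Matrix.mul_smul, Matrix.trace_smul, smul_eq_mul,
    Finset.mul_sum, Matrix.trace_sum]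
  have hz : ∀ g ∈ G.carrier, ((pauliOp P * pauliOp Q) * g).trace = 0 := by
    intro g hg
    obtain ⟨d, q, hd, rfl⟩ := G.mem_pauli g hg
    set ω : ℂ := ∏ i, pphase (P i) (Q i) with hω
    set r : V → Fin 4 := fun i => pmul (P i) (Q i) with hr
    have hPQ : pauliOp P * pauliOp Q = ω • pauliOp r := pauliOp_mul P Q
    have hωph : isPhase ω := isPhase_prod P Q
    have hων : ω ≠ 0 := isPhase_ne_zero hωph
    rw [hPQ, Matrix.smul_mul, Matrix.mul_smul, smul_smul, pauliOp_mul r q, smul_smul,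
      Matrix.trace_smul, smul_eq_mul, pauliOp_trace]
    by_cases hrq : (fun i => pmul (r i) (q i)) = fun _ => 0
    · exfalso
      have hrq' : r = q := by
        funext i
        exact (pmul_eq_zero_iff (r i) (q i)).mp (congrFun hrq i)
      apply hQ
      refine ⟨d * ω⁻¹, ?_, ?_⟩
      · have hdph : isPhase d := by
          rcases hd with rfl | rfl
          · exact Or.inl rfl
          · exact Or.inr (Or.inl rfl)
        exact isPhase_mul hdph (isPhase_inv hωph)
      · have key : (d * ω⁻¹) • (pauliOp P * pauliOp Q) = d • pauliOp q := by
          rw [hPQ, smul_smul, hrq']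
          congr 1
          field_simp
        rw [key]
        exact hg
    · rw [if_neg hrq, mul_zero]
  rw [Finset.sum_eq_zero hz, mul_zero]

lemma expval_rel (G : MaxStabilizer V) (ψ : (V → Fin 2) → ℂ) (hψ : IsStabState G ψ)
    (P Q : V → Fin 4) {aQ : ℂ} (haph : isPhase aQ)
    (hmem : aQ • (pauliOp P * pauliOp Q) ∈ G.carrier) :
    star ψ ⬝ᵥ (pauliOp P * pauliOp Q).mulVec ψ = aQ⁻¹ := by
  have h1 := expval_mem G ψ hψ hmem
  rw [Matrix.smul_mulVec, dotProduct_smul, smul_eq_mul] at h1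
  have hne := isPhase_ne_zero haph
  field_simp
  rw [mul_comm]
  exact h1

/-- if the traceless `Ĥ = Σ_P h(P)·P` annihilates the stabilizer state,
then for every prefactor-1 Pauli string `P`,
`Σ_{Q : a_{P,Q}PQ ∈ G} h(Q)·a_{P,Q}⁻¹ = 0`, the sum over nonidentity `Q ∼ P`. -/
theorem stmt18 (N : ℕ) (G : MaxStabilizer (Fin N)) (ψ : (Fin N → Fin 2) → ℂ)
    (hψ : IsStabState G ψ) (h : (Fin N → Fin 4) → ℂ)
    (htr : h (fun _ => 0) = 0)
    (hann : (∑ P : Fin N → Fin 4, h P • pauliOp P).mulVec ψ = 0)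
    (P : Fin N → Fin 4) (a : (Fin N → Fin 4) → ℂ)
    (ha : ∀ Q, PRel G P Q → isPhase (a Q) ∧ a Q • (pauliOp P * pauliOp Q) ∈ G.carrier) :
    ∑ Q ∈ Finset.univ.filter (fun Q : Fin N → Fin 4 =>
      Q ≠ (fun _ => 0) ∧ PRel G P Q), h Q * (a Q)⁻¹ = 0 := by
  set E : (Fin N → Fin 4) → ℂ := fun Q => star ψ ⬝ᵥ (pauliOp P * pauliOp Q).mulVec ψ with hE
  have key : ∑ Q : Fin N → Fin 4, h Q * E Q = 0 := by
    have h1 : (∑ Q : Fin N → Fin 4, h Q • (pauliOp P * pauliOp Q)).mulVec ψ = 0 := by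
      have h2 : (∑ Q : Fin N → Fin 4, h Q • (pauliOp P * pauliOp Q))
          = pauliOp P * (∑ Q : Fin N → Fin 4, h Q • pauliOp Q) := by
        rw [Finset.mul_sum]
        exact Finset.sum_congr rfl fun Q _ => (Matrix.mul_smul _ _ _).symm
      rw [h2, ← Matrix.mulVec_mulVec, hann, Matrix.mulVec_zero]
    calc ∑ Q : Fin N → Fin 4, h Q * E Q
        = star ψ ⬝ᵥ (∑ Q : Fin N → Fin 4, h Q • (pauliOp P * pauliOp Q)).mulVec ψ := by
          rw [sum_mulVec', dot_sum']
          refine Finset.sum_congr rfl fun Q _ => ?_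
          rw [Matrix.smul_mulVec, dotProduct_smul, smul_eq_mul, hE]
      _ = 0 := by rw [h1, dotProduct_zero]
  rw [← Finset.sum_filter_add_sum_filter_not Finset.univ
      (fun Q : Fin N → Fin 4 => Q ≠ (fun _ => 0) ∧ PRel G P Q)
      (fun Q => h Q * E Q)] at key
  have hrest : ∑ Q ∈ Finset.univ.filter
      (fun Q : Fin N → Fin 4 => ¬(Q ≠ (fun _ => 0) ∧ PRel G P Q)), h Q * E Q = 0 := by
    apply Finset.sum_eq_zero
    intro Q hQ
    simp only [Finset.mem_filter] at hQ
    rcases not_and_or.mp hQ.2 with hQ0 | hnr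
    · have hq : Q = fun _ => 0 := not_not.mp hQ0
      rw [hq, htr, zero_mul]
    · have : E Q = 0 := expval_not_rel G ψ hψ P Q hnr
      rw [this, mul_zero]
  rw [hrest, add_zero] at key
  calc ∑ Q ∈ Finset.univ.filter (fun Q : Fin N → Fin 4 =>
        Q ≠ (fun _ => 0) ∧ PRel G P Q), h Q * (a Q)⁻¹
      = ∑ Q ∈ Finset.univ.filter (fun Q : Fin N → Fin 4 =>
        Q ≠ (fun _ => 0) ∧ PRel G P Q), h Q * E Q := by
        refine Finset.sum_congr rfl fun Q hQ => ?_
        simp only [Finset.mem_filter] at hQ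
        obtain ⟨haph, hmem⟩ := ha Q hQ.2.2
        have : E Q = (a Q)⁻¹ := expval_rel G ψ hψ P Q haph hmem
        rw [this]
    _ = 0 := key
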